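/- Let p₁, p₂, p₃ be vectors in ℝ^4 equipped with a symmetric bilinear form of signature (-,+,+,+), each with ⟨pᵢ,pᵢ⟩ = -1 and with rᵢ := -⟨pᵢ,p_{i+1}⟩ > 0 (indices mod 3). Then rᵢ² ≥ 1 for each i and r₁² + r₂² + r₃² ≤ 2 r₁ r₂ r₃ + 1. -/

import Mathlib

set_option maxHeartbeats 1000000


lemma aux_arith (t x1 x2 x3 s y1 y2 y3 : ℝ)
    (hp : -(t*t)+x1*x1+x2*x2+x3*x3 = -1)
    (hv : -(t*s)+x1*y1+x2*y2+x3*y3 = 0) :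
    0 ≤ -(s*s)+y1*y1+y2*y2+y3*y3 := by
  have hcs : (x1*y1+x2*y2+x3*y3)^2 ≤ (x1^2+x2^2+x3^2)*(y1^2+y2^2+y3^2) := by
    nlinarith [sq_nonneg (x1*y2 - x2*y1), sq_nonneg (x1*y3 - x3*y1), sq_nonneg (x2*y3 - x3*y2)]
  have hvs : t*s = x1*y1+x2*y2+x3*y3 := by linarith
  have key : t^2*s^2 ≤ (t^2-1)*(y1^2+y2^2+y3^2) := by
    have h2 : (t*s)^2 ≤ (x1^2+x2^2+x3^2)*(y1^2+y2^2+y3^2) := by rw [hvs]; exact hcs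
    nlinarith [h2]
  have ht : 1 ≤ t^2 := by nlinarith [sq_nonneg x1, sq_nonneg x2, sq_nonneg x3]
  nlinarith [key, ht, sq_nonneg y1, sq_nonneg y2, sq_nonneg y3, sq_nonneg s]

lemma aux_pos (B : LinearMap.BilinForm ℝ (Fin 4 → ℝ))
    (b : Module.Basis (Fin 4) ℝ (Fin 4 → ℝ))
    (horth : ∀ i j, i ≠ j → B (b i) (b j) = 0)
    (hb0 : B (b 0) (b 0) = -1) (hb1 : B (b 1) (b 1) = 1)
    (hb2 : B (b 2) (b 2) = 1) (hb3 : B (b 3) (b 3) = 1)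
    (p : Fin 4 → ℝ) (hp : B p p = -1)
    (v : Fin 4 → ℝ) (hv : B p v = 0) : 0 ≤ B v v := by
  have expand : ∀ x y : Fin 4 → ℝ, B x y = -(b.repr x 0 * b.repr y 0) + b.repr x 1 * b.repr y 1
      + b.repr x 2 * b.repr y 2 + b.repr x 3 * b.repr y 3 := by
    intro x y
    conv_lhs => rw [← b.sum_repr x, ← b.sum_repr y]
    simp [map_sum, Fin.sum_univ_four, horth, hb0, hb1, hb2, hb3, -Module.Basis.sum_repr]
  rw [expand] at hp hv ⊢
  exact aux_arith _ _ _ _ _ _ _ _ hp hv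

/-- For three normalized negative vectors in `ℝ⁴` with a symmetric bilinear form
of signature `(-,+,+,+)`, the quantities `rᵢ = -⟨pᵢ, p_{i+1}⟩ > 0` satisfy
`rᵢ² ≥ 1` and `r₁² + r₂² + r₃² ≤ 2r₁r₂r₃ + 1`. -/
theorem stmt_14 (B : LinearMap.BilinForm ℝ (Fin 4 → ℝ))
    (hsymm : ∀ x y, B x y = B y x)
    (b : Module.Basis (Fin 4) ℝ (Fin 4 → ℝ))
    (horth : ∀ i j, i ≠ j → B (b i) (b j) = 0)
    (hb0 : B (b 0) (b 0) = -1) (hb1 : B (b 1) (b 1) = 1)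
    (hb2 : B (b 2) (b 2) = 1) (hb3 : B (b 3) (b 3) = 1)
    (p₁ p₂ p₃ : Fin 4 → ℝ)
    (hp₁ : B p₁ p₁ = -1) (hp₂ : B p₂ p₂ = -1) (hp₃ : B p₃ p₃ = -1)
    (r₁ r₂ r₃ : ℝ)
    (hr₁ : r₁ = -B p₁ p₂) (hr₂ : r₂ = -B p₂ p₃) (hr₃ : r₃ = -B p₃ p₁)
    (hr₁pos : 0 < r₁) (hr₂pos : 0 < r₂) (hr₃pos : 0 < r₃) :
    (1 ≤ r₁ ^ 2 ∧ 1 ≤ r₂ ^ 2 ∧ 1 ≤ r₃ ^ 2) ∧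
      r₁ ^ 2 + r₂ ^ 2 + r₃ ^ 2 ≤ 2 * r₁ * r₂ * r₃ + 1 := by
  have pos1 := aux_pos B b horth hb0 hb1 hb2 hb3 p₁ hp₁
  have pos2 := aux_pos B b horth hb0 hb1 hb2 hb3 p₂ hp₂
  -- scalar values of the form
  have e12 : B p₁ p₂ = -r₁ := by linarith
  have e21 : B p₂ p₁ = -r₁ := by rw [hsymm]; linarith
  have e23 : B p₂ p₃ = -r₂ := by linarith
  have e32 : B p₃ p₂ = -r₂ := by rw [hsymm]; linarith
  have e31 : B p₃ p₁ = -r₃ := by linarith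
  have e13 : B p₁ p₃ = -r₃ := by rw [hsymm]; linarith
  set q₂ : Fin 4 → ℝ := p₂ - r₁ • p₁ with hq₂
  set q₃ : Fin 4 → ℝ := p₃ - r₃ • p₁ with hq₃
  have hq2perp : B p₁ q₂ = 0 := by
    simp only [hq₂, map_sub, map_smul, smul_eq_mul, e12, hp₁]; ring
  have hq3perp : B p₁ q₃ = 0 := by
    simp only [hq₃, map_sub, map_smul, smul_eq_mul, e13, hp₁]; ring
  have ha : B q₂ q₂ = r₁^2 - 1 := by
    simp only [hq₂, map_sub, map_smul, LinearMap.sub_apply, LinearMap.smul_apply,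
      smul_eq_mul, e12, e21, hp₁, hp₂]; ring
  have hd : B q₃ q₃ = r₃^2 - 1 := by
    simp only [hq₃, map_sub, map_smul, LinearMap.sub_apply, LinearMap.smul_apply,
      smul_eq_mul, e13, e31, hp₁, hp₃]; ring
  have hc : B q₂ q₃ = r₁*r₃ - r₂ := by
    simp only [hq₂, hq₃, map_sub, map_smul, LinearMap.sub_apply, LinearMap.smul_apply,
      smul_eq_mul, e12, e21, e13, e31, e23, hp₁]; ring
  have hc' : B q₃ q₂ = r₁*r₃ - r₂ := by rw [hsymm]; exact hc
  have ha' : 0 ≤ r₁^2 - 1 := by have := pos1 q₂ hq2perp; rwa [ha] at this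
  have hd' : 0 ≤ r₃^2 - 1 := by have := pos1 q₃ hq3perp; rwa [hd] at this
  have hr2sq : 0 ≤ r₂^2 - 1 := by
    have h := pos2 (p₃ - r₂ • p₂) (by
      simp only [map_sub, map_smul, smul_eq_mul, e23, hp₂]; ring)
    simp only [map_sub, map_smul, LinearMap.sub_apply, LinearMap.smul_apply,
      smul_eq_mul, e23, e32, hp₂, hp₃] at h
    nlinarith [h]
  -- Cauchy-Schwarz on the orthocomplement of p₁
  have perp : ∀ α β : ℝ, B p₁ (α • q₂ + β • q₃) = 0 := by
    intro α β
    simp only [map_add, map_smul, smul_eq_mul, hq2perp, hq3perp]; ring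
  have expand : ∀ α β : ℝ, B (α • q₂ + β • q₃) (α • q₂ + β • q₃)
      = α^2 * (r₁^2-1) + 2*α*β*(r₁*r₃-r₂) + β^2 * (r₃^2-1) := by
    intro α β
    simp only [map_add, map_smul, LinearMap.add_apply, LinearMap.smul_apply,
      smul_eq_mul, ha, hd, hc, hc']
    ring
  have cs : (r₁*r₃ - r₂)^2 ≤ (r₁^2-1) * (r₃^2-1) := by
    by_cases hz : r₁^2 - 1 + (r₃^2 - 1) = 0
    · have ha1 : r₁^2 - 1 = 0 := by linarith
      have hd1 : r₃^2 - 1 = 0 := by linarith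
      have h3 := pos1 _ (perp 1 1)
      rw [expand] at h3
      have h4 := pos1 _ (perp 1 (-1))
      rw [expand] at h4
      nlinarith [h3, h4, ha1, hd1]
    · have h1 := pos1 _ (perp (r₃^2-1) (-(r₁*r₃-r₂)))
      rw [expand] at h1
      have h2 := pos1 _ (perp (-(r₁*r₃-r₂)) (r₁^2-1))
      rw [expand] at h2
      nlinarith [h1, h2, ha', hd', lt_of_le_of_ne (by linarith) (Ne.symm hz)]
  refine ⟨⟨by linarith, by linarith, by linarith⟩, by nlinarith [cs]⟩
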